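/- For all n ≥ 0 and i ≥ 0, the convolution identities t_{2n+1,i,0} = Σ_{k≥0} C(2n,2k) Σ_{j=0}^i t_{2k,j,0} s_{2n-2k,i-j,0} and t_{2n+2,i+1,0} = Σ_{k≥0} C(2n+1,2k+1) Σ_{j=0}^i t_{2k+1,j,0} s_{2n-2k,i-j,0} hold. -/

import Mathlib

open MvPolynomial Finset

/-- The derivation for the grammar `G = {w → wx, x → yz, y → xz, z → xy}` on `ℚ[w,x,y,z]`
(`w = X 0`, `x = X 1`, `y = X 2`, `z = X 3`). -/
noncomputable def Dg : Derivation ℚ (MvPolynomial (Fin 4) ℚ) (MvPolynomial (Fin 4) ℚ) :=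
  MvPolynomial.mkDerivation ℚ ![X 0 * X 1, X 2 * X 3, X 1 * X 3, X 1 * X 2]

/-- `tC n i j` is the coefficient `t_{n,i,j}` of `D^n(w)`:
for even `n`, the coefficient of `w x^(2i) y^j z^(n-2i-j)`;
for odd `n`, the coefficient of `w x^(2i+1) y^j z^(n-1-2i-j)`.
Coefficients with negative indices are `0`. -/
noncomputable def tC (n : ℕ) (i j : ℤ) : ℚ :=
  if 0 ≤ i ∧ 0 ≤ j then
    MvPolynomial.coeff
      (Finsupp.single 0 1
        + Finsupp.single 1 ((if Even n then 2*i else 2*i+1).toNat)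
        + Finsupp.single 2 j.toNat
        + Finsupp.single 3 (((n:ℤ) - 2*i - j - if Even n then 0 else 1).toNat))
      ((fun p => Dg p)^[n] (X 0))
  else 0

/-- `sC n i j` is the Dumont coefficient `s_{n,i,j}` of `D^n(x)`:
for even `n`, the coefficient of `x^(2i+1) y^(2j) z^(n-2i-2j)`;
for odd `n`, the coefficient of `x^(2i) y^(2j+1) z^(n-2i-2j)`.
Coefficients with negative indices are `0`. -/
noncomputable def sC (n : ℕ) (i j : ℤ) : ℚ :=
  if 0 ≤ i ∧ 0 ≤ j then
    MvPolynomial.coeff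
      (Finsupp.single 1 ((if Even n then 2*i+1 else 2*i).toNat)
        + Finsupp.single 2 ((if Even n then 2*j else 2*j+1).toNat)
        + Finsupp.single 3 (((n:ℤ) - 2*i - 2*j).toNat))
      ((fun p => Dg p)^[n] (X 1))
  else 0

noncomputable def mv : Fin 4 → (Fin 4 →₀ ℕ) :=
  ![Finsupp.single 0 1 + Finsupp.single 1 1, Finsupp.single 2 1 + Finsupp.single 3 1,
    Finsupp.single 1 1 + Finsupp.single 3 1, Finsupp.single 1 1 + Finsupp.single 2 1]

lemma rule_eq (i : Fin 4) :
    (![X 0 * X 1, X 2 * X 3, X 1 * X 3, X 1 * X 2] : Fin 4 → MvPolynomial (Fin 4) ℚ) i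
      = monomial (mv i) 1 := by
  fin_cases i <;>
    simp [mv, X, monomial_mul]

lemma supp_Dg {p : MvPolynomial (Fin 4) ℚ} {d} (hd : d ∈ (Dg p).support) :
    ∃ d' ∈ p.support, ∃ i : Fin 4, d' i ≠ 0 ∧ d = d' - Finsupp.single i 1 + mv i := by
  have hp : Dg p = ∑ v ∈ p.support, Dg (monomial v (coeff v p)) := by
    conv_lhs => rw [p.as_sum]
    rw [map_sum]
  rw [hp] at hd
  obtain ⟨v, hv, hdv⟩ := Finset.mem_biUnion.mp (MvPolynomial.support_sum hd)
  refine ⟨v, hv, ?_⟩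
  rw [show Dg (monomial v (coeff v p)) = MvPolynomial.mkDerivation ℚ
      ![X 0 * X 1, X 2 * X 3, X 1 * X 3, X 1 * X 2] (monomial v (coeff v p)) from rfl,
    mkDerivation_monomial] at hdv
  have h2 := MvPolynomial.support_smul hdv
  rw [Finsupp.sum] at h2
  obtain ⟨i, hi, hdi⟩ := Finset.mem_biUnion.mp (MvPolynomial.support_sum h2)
  refine ⟨i, Finsupp.mem_support_iff.mp hi, ?_⟩
  rw [rule_eq, smul_eq_mul, monomial_mul, mul_one] at hdi
  have := MvPolynomial.support_monomial_subset hdi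
  simpa using this

lemma invW : ∀ n : ℕ, ∀ d ∈ ((fun p => Dg p)^[n] (X (0:Fin 4) : MvPolynomial (Fin 4) ℚ)).support,
    d 0 = 1 ∧ d 1 % 2 = n % 2 ∧ (d 2 + d 3) % 2 = 0 ∧ d 1 + d 2 + d 3 = n := by
  intro n
  induction n with
  | zero =>
    intro d hd
    simp only [Function.iterate_zero, id_eq, support_X, Finset.mem_singleton] at hd
    subst hd
    simp [Finsupp.single_apply]
  | succ n ih =>
    intro d hd
    rw [Function.iterate_succ_apply'] at hd
    obtain ⟨d', hd', i, hi, rfl⟩ := supp_Dg hd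
    obtain ⟨h0, h1, h2, h3⟩ := ih d' hd'
    have comp : ∀ j : Fin 4, (d' - Finsupp.single i 1 + mv i : Fin 4 →₀ ℕ) j
        = d' j - Finsupp.single i 1 j + mv i j := fun j => by simp [Finsupp.tsub_apply]
    rw [comp 0, comp 1, comp 2, comp 3]
    fin_cases i <;>
      simp [mv, Finsupp.single_apply, Finsupp.tsub_apply] at hi ⊢ <;>
      omega

lemma invX : ∀ n : ℕ, ∀ d ∈ ((fun p => Dg p)^[n] (X (1:Fin 4) : MvPolynomial (Fin 4) ℚ)).support,
    d 0 = 0 ∧ d 1 % 2 = (n+1) % 2 ∧ d 2 % 2 = n % 2 ∧ d 3 % 2 = n % 2 ∧ d 1 + d 2 + d 3 = n + 1 := by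
  intro n
  induction n with
  | zero =>
    intro d hd
    simp only [Function.iterate_zero, id_eq, support_X, Finset.mem_singleton] at hd
    subst hd
    simp [Finsupp.single_apply]
  | succ n ih =>
    intro d hd
    rw [Function.iterate_succ_apply'] at hd
    obtain ⟨d', hd', i, hi, rfl⟩ := supp_Dg hd
    obtain ⟨h0, h1, h2, h3, h4⟩ := ih d' hd'
    have comp : ∀ j : Fin 4, (d' - Finsupp.single i 1 + mv i : Fin 4 →₀ ℕ) j
        = d' j - Finsupp.single i 1 j + mv i j := fun j => by simp [Finsupp.tsub_apply]
    rw [comp 0, comp 1, comp 2, comp 3]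
    fin_cases i <;>
      simp [mv, Finsupp.single_apply, Finsupp.tsub_apply] at hi ⊢ <;>
      omega

lemma iter_leibniz (f g : MvPolynomial (Fin 4) ℚ) (m : ℕ) :
    (fun p => Dg p)^[m] (f * g) =
      ∑ k ∈ range (m+1), (m.choose k) •
        ((fun p => Dg p)^[k] f * (fun p => Dg p)^[m-k] g) := by
  let F : ℕ → MvPolynomial (Fin 4) ℚ → MvPolynomial (Fin 4) ℚ := fun k => (fun p => Dg p)^[k]
  show F m (f*g) = ∑ k ∈ range (m+1), (m.choose k) • (F k f * F (m-k) g)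
  induction m with
  | zero => simp [F]
  | succ m ih =>
    have hsucc : ∀ (k : ℕ) (p : MvPolynomial (Fin 4) ℚ), F (k+1) p = Dg (F k p) := fun k p =>
      Function.iterate_succ_apply' _ _ _
    rw [show F (m+1) (f*g) = Dg (F m (f*g)) from hsucc m _, ih]
    have expand : Dg (∑ k ∈ range (m+1), (m.choose k) • (F k f * F (m-k) g)) =
        (∑ k ∈ range (m+1), (m.choose k) • (F (k+1) f * F (m-k) g))
        + (∑ k ∈ range (m+1), (m.choose k) • (F k f * F (m+1-k) g)) := by
      rw [map_sum, ← Finset.sum_add_distrib]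
      refine Finset.sum_congr rfl fun k hk => ?_
      have hk' : k ≤ m := by simpa [Nat.lt_succ_iff] using hk
      rw [map_nsmul, Derivation.leibniz, hsucc k f,
        show m+1-k = (m-k)+1 by omega, hsucc (m-k) g, smul_add, ← smul_add]
      rw [smul_eq_mul, smul_eq_mul]
      ring
    rw [expand]
    have rhs : ∑ k ∈ range (m+2), ((m+1).choose k) • (F k f * F (m+1-k) g)
        = (F 0 f * F (m+1) g)
          + ∑ k ∈ range (m+1), ((m.choose k) + (m.choose (k+1))) • (F (k+1) f * F (m-k) g) := by
      rw [Finset.sum_range_succ' _ (m+1)]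
      simp only [Nat.choose_zero_right, one_smul, Nat.choose_succ_succ, Nat.succ_sub_succ,
        Nat.sub_zero]
      rw [add_comm]
    rw [rhs]
    simp only [add_smul]
    rw [Finset.sum_add_distrib]
    have shift : ∑ k ∈ range (m+1), (m.choose (k+1)) • (F (k+1) f * F (m-k) g)
        = ∑ k ∈ range (m+1), (m.choose k) • (F k f * F (m+1-k) g) - (F 0 f * F (m+1) g) := by
      rw [Finset.sum_range_succ (fun k => (m.choose (k+1)) • (F (k+1) f * F (m-k) g)) m]
      simp only [Nat.choose_succ_self, zero_smul, add_zero]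
      rw [Finset.sum_range_succ' (fun k => (m.choose k) • (F k f * F (m+1-k) g)) m]
      simp only [Nat.choose_zero_right, one_smul, Nat.sub_zero, Nat.succ_sub_succ]
      rw [add_sub_cancel_right]
    rw [shift]
    abel

/-- Exponent vector `w^a x^b y^c z^d`. -/
noncomputable def M (a b c d : ℕ) : Fin 4 →₀ ℕ :=
  Finsupp.single 0 a + Finsupp.single 1 b + Finsupp.single 2 c + Finsupp.single 3 d

lemma M_apply (a b c d : ℕ) :
    M a b c d 0 = a ∧ M a b c d 1 = b ∧ M a b c d 2 = c ∧ M a b c d 3 = d := by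
  refine ⟨?_, ?_, ?_, ?_⟩ <;> simp [M, Finsupp.single_apply]

lemma M_eq_iff (u : Fin 4 →₀ ℕ) (a b c d : ℕ) :
    u = M a b c d ↔ (u 0 = a ∧ u 1 = b ∧ u 2 = c ∧ u 3 = d) := by
  obtain ⟨m0, m1, m2, m3⟩ := M_apply a b c d
  constructor
  · rintro rfl; exact ⟨m0, m1, m2, m3⟩
  · rintro ⟨h0, h1, h2, h3⟩
    ext j
    fin_cases j <;> simp_all

lemma tC_eval (n i : ℕ) :
    tC n (i:ℤ) 0 = MvPolynomial.coeff (M 1 (if Even n then 2*i else 2*i+1) 0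
      (n - (if Even n then 2*i else 2*i+1))) ((fun p => Dg p)^[n] (X 0)) := by
  rw [tC, if_pos ⟨Int.natCast_nonneg i, le_refl 0⟩]
  congr 1
  rw [M]
  rcases Nat.even_or_odd n with hn | hn
  · simp only [if_pos hn]
    ext j; fin_cases j <;> simp [Finsupp.single_apply] <;> omega
  · simp only [if_neg (Nat.not_even_iff_odd.mpr hn)]
    ext j; fin_cases j <;> simp [Finsupp.single_apply] <;> omega

lemma sC_eval (n i : ℕ) :
    sC n (i:ℤ) 0 = MvPolynomial.coeff (M 0 (if Even n then 2*i+1 else 2*i)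
      (if Even n then 0 else 1) (n - 2*i)) ((fun p => Dg p)^[n] (X 1)) := by
  rw [sC, if_pos ⟨Int.natCast_nonneg i, le_refl 0⟩]
  congr 1
  rw [M, Finsupp.single_zero, zero_add]
  rcases Nat.even_or_odd n with hn | hn
  · simp only [if_pos hn]
    ext j; fin_cases j <;> simp [Finsupp.single_apply] <;> omega
  · simp only [if_neg (Nat.not_even_iff_odd.mpr hn)]
    ext j; fin_cases j <;> simp [Finsupp.single_apply] <;> omega

lemma M_add (a b c d a' b' c' d' : ℕ) :
    M a b c d + M a' b' c' d' = M (a+a') (b+b') (c+c') (d+d') := by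
  rw [M_eq_iff]
  obtain ⟨r0, r1, r2, r3⟩ := M_apply a b c d
  obtain ⟨s0, s1, s2, s3⟩ := M_apply a' b' c' d'
  refine ⟨?_, ?_, ?_, ?_⟩ <;> rw [Finsupp.add_apply] <;> omega
lemma conv (a b i : ℕ) (hb : b % 2 = 0) :
    MvPolynomial.coeff (M 1 (a % 2 + (2*i+1)) 0 (a - a % 2 + b - 2*i))
      ((fun p => Dg p)^[a] (X 0) * (fun p => Dg p)^[b] (X 1))
    = ∑ j ∈ range (i+1),
        MvPolynomial.coeff (M 1 (a % 2 + 2*j) 0 (a - (a % 2 + 2*j)))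
          ((fun p => Dg p)^[a] (X 0))
        * MvPolynomial.coeff (M 0 (2*(i-j)+1) 0 (b - 2*(i-j)))
          ((fun p => Dg p)^[b] (X 1)) := by
  set A := (fun p => Dg p)^[a] (X 0 : MvPolynomial (Fin 4) ℚ) with hA
  set B := (fun p => Dg p)^[b] (X 1 : MvPolynomial (Fin 4) ℚ) with hB
  obtain ⟨m0, m1, m2, m3⟩ := M_apply 1 (a % 2 + (2*i+1)) 0 (a - a % 2 + b - 2*i)
  rw [MvPolynomial.coeff_mul]
  -- structure of nonzero terms
  have struct : ∀ u v : Fin 4 →₀ ℕ,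
      u + v = M 1 (a % 2 + (2*i+1)) 0 (a - a % 2 + b - 2*i) →
      MvPolynomial.coeff u A * MvPolynomial.coeff v B ≠ 0 →
      u 1 / 2 ≤ i ∧ u = M 1 (a % 2 + 2*(u 1 / 2)) 0 (a - (a % 2 + 2*(u 1 / 2)))
        ∧ v = M 0 (2*(i - u 1 / 2)+1) 0 (b - 2*(i - u 1 / 2)) := by
    intro u v huv hne
    have hu0 : MvPolynomial.coeff u A ≠ 0 := fun h => hne (by rw [h, zero_mul])
    have hv0 : MvPolynomial.coeff v B ≠ 0 := fun h => hne (by rw [h, mul_zero])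
    obtain ⟨w0, w1, w2, w3⟩ := invW a u (MvPolynomial.mem_support_iff.mpr hu0)
    obtain ⟨x0, x1, x2, x3, x4⟩ := invX b v (MvPolynomial.mem_support_iff.mpr hv0)
    have c0 : u 0 + v 0 = 1 := by rw [← Finsupp.add_apply, huv, m0]
    have c1 : u 1 + v 1 = a % 2 + (2*i+1) := by rw [← Finsupp.add_apply, huv, m1]
    have c2 : u 2 + v 2 = 0 := by rw [← Finsupp.add_apply, huv, m2]
    have c3 : u 3 + v 3 = a - a % 2 + b - 2*i := by rw [← Finsupp.add_apply, huv, m3]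
    refine ⟨by omega, ?_, ?_⟩
    · rw [M_eq_iff]
      refine ⟨w0, by omega, by omega, by omega⟩
    · rw [M_eq_iff]
      refine ⟨x0, by omega, by omega, by omega⟩
  refine Finset.sum_bij_ne_zero (fun uv _ _ => uv.1 1 / 2) ?_ ?_ ?_ ?_
  · -- membership
    rintro ⟨u, v⟩ h₁ h₂
    have huv := Finset.HasAntidiagonal.mem_antidiagonal.mp h₁
    obtain ⟨hji, -, -⟩ := struct u v huv h₂
    simpa [Nat.lt_succ_iff] using hji
  · -- injectivity
    rintro ⟨u₁, v₁⟩ h₁₁ h₁₂ ⟨u₂, v₂⟩ h₂₁ h₂₂ hjj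
    simp only at hjj
    obtain ⟨-, hu1, hv1⟩ := struct u₁ v₁ (Finset.HasAntidiagonal.mem_antidiagonal.mp h₁₁) h₁₂
    obtain ⟨-, hu2, hv2⟩ := struct u₂ v₂ (Finset.HasAntidiagonal.mem_antidiagonal.mp h₂₁) h₂₂
    rw [Prod.mk.injEq]
    constructor
    · rw [hu1, hu2, hjj]
    · rw [hv1, hv2, hjj]
  · -- surjectivity
    intro j hj hg
    have hji : j ≤ i := by simpa [Nat.lt_succ_iff] using hj
    have hgu : MvPolynomial.coeff (M 1 (a % 2 + 2*j) 0 (a - (a % 2 + 2*j))) A ≠ 0 :=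
      fun h => hg (by rw [h, zero_mul])
    have hgv : MvPolynomial.coeff (M 0 (2*(i-j)+1) 0 (b - 2*(i-j))) B ≠ 0 :=
      fun h => hg (by rw [h, mul_zero])
    obtain ⟨w0, w1, w2, w3⟩ := invW a _ (MvPolynomial.mem_support_iff.mpr hgu)
    obtain ⟨x0, x1, x2, x3, x4⟩ := invX b _ (MvPolynomial.mem_support_iff.mpr hgv)
    obtain ⟨p0, p1, p2, p3⟩ := M_apply 1 (a % 2 + 2*j) 0 (a - (a % 2 + 2*j))
    obtain ⟨q0, q1, q2, q3⟩ := M_apply 0 (2*(i-j)+1) 0 (b - 2*(i-j))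
    rw [p1] at w1
    rw [p2, p3] at w2
    rw [p1, p2, p3] at w3
    rw [q1] at x1
    rw [q2] at x2
    rw [q3] at x3
    rw [q1, q2, q3] at x4
    refine ⟨(M 1 (a % 2 + 2*j) 0 (a - (a % 2 + 2*j)), M 0 (2*(i-j)+1) 0 (b - 2*(i-j))), ?_, hg, ?_⟩
    · rw [Finset.HasAntidiagonal.mem_antidiagonal, M_add, M_eq_iff]
      obtain ⟨r0, r1, r2, r3⟩ := M_apply (1+0) ((a % 2 + 2*j)+(2*(i-j)+1)) (0+0)
        ((a - (a % 2 + 2*j))+(b - 2*(i-j)))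
      exact ⟨by rw [r0], by rw [r1]; omega, by rw [r2], by rw [r3]; omega⟩
    · simp only [p1]
      omega
  · -- values
    rintro ⟨u, v⟩ h₁ h₂
    obtain ⟨-, hu, hv⟩ := struct u v (Finset.HasAntidiagonal.mem_antidiagonal.mp h₁) h₂
    simp only
    rw [← hu, ← hv]

lemma sum_even_reindex (f : ℕ → ℚ) (n : ℕ) (h : ∀ k, k % 2 = 1 → f k = 0) :
    ∑ k ∈ range (2*n+1), f k = ∑ k ∈ range (n+1), f (2*k) := by
  induction n with
  | zero => simp
  | succ n ih =>
    rw [show 2*(n+1)+1 = (2*n+1)+1+1 by omega, Finset.sum_range_succ, Finset.sum_range_succ,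
      ih, Finset.sum_range_succ, h (2*n+1) (by omega)]
    rw [show 2*n+1+1 = 2*(n+1) by omega, Finset.sum_range_succ (fun k => f (2*k)) (n+1),
      Finset.sum_range_succ (fun k => f (2*k)) n]
    ring

lemma sum_odd_reindex (f : ℕ → ℚ) (n : ℕ) (h : ∀ k, k % 2 = 0 → f k = 0) :
    ∑ k ∈ range (2*n+2), f k = ∑ k ∈ range (n+1), f (2*k+1) := by
  induction n with
  | zero => simp [Finset.sum_range_succ, h 0 rfl]
  | succ n ih =>
    rw [show 2*(n+1)+2 = (2*n+2)+1+1 by omega, Finset.sum_range_succ, Finset.sum_range_succ,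
      ih, Finset.sum_range_succ, h (2*n+2) (by omega)]
    rw [show 2*n+2+1 = 2*(n+1)+1 by omega, Finset.sum_range_succ (fun k => f (2*k+1)) (n+1),
      Finset.sum_range_succ (fun k => f (2*k+1)) n]
    ring

lemma vanish (k m : ℕ) (hm : m % 2 = 1) (μ : Fin 4 →₀ ℕ) (hμ : μ 2 = 0) :
    MvPolynomial.coeff μ
      ((fun p => Dg p)^[k] (X 0) * (fun p => Dg p)^[m] (X 1)) = 0 := by
  rw [MvPolynomial.coeff_mul]
  apply Finset.sum_eq_zero
  rintro ⟨u, v⟩ h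
  have huv := Finset.HasAntidiagonal.mem_antidiagonal.mp h
  by_contra hne
  have hv0 : MvPolynomial.coeff v ((fun p => Dg p)^[m] (X 1)) ≠ 0 :=
    fun h' => hne (by simp only at hne ⊢; rw [h', mul_zero])
  obtain ⟨-, -, x2, -, -⟩ := invX m v (MvPolynomial.mem_support_iff.mpr hv0)
  have c2 : u 2 + v 2 = 0 := by rw [← Finsupp.add_apply, huv, hμ]
  omega

theorem stmt17 (n : ℕ) (i : ℕ) :
    tC (2*n+1) (i:ℤ) 0 =
      ∑ k ∈ Finset.range (n+1), ((2*n).choose (2*k) : ℚ) *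
        ∑ j ∈ Finset.range (i+1), tC (2*k) (j:ℤ) 0 * sC (2*n-2*k) ((i:ℤ)-(j:ℤ)) 0 ∧
    tC (2*n+2) ((i:ℤ)+1) 0 =
      ∑ k ∈ Finset.range (n+1), ((2*n+1).choose (2*k+1) : ℚ) *
        ∑ j ∈ Finset.range (i+1), tC (2*k+1) (j:ℤ) 0 * sC (2*n-2*k) ((i:ℤ)-(j:ℤ)) 0 := by
  have hDX0 : Dg (X 0) = X 0 * X 1 := by
    rw [Dg, mkDerivation_X]
    rfl
  have hμ2 : ∀ a b c : ℕ, (M a b 0 c) 2 = 0 := fun a b c => (M_apply a b 0 c).2.2.1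
  constructor
  · -- first identity
    rw [tC_eval (2*n+1) i]
    have hodd : ¬ Even (2*n+1) := by simp [Nat.even_add_one, Nat.even_mul]
    simp only [if_neg hodd]
    have hit : (fun p => Dg p)^[2*n+1] (X 0 : MvPolynomial (Fin 4) ℚ)
        = (fun p => Dg p)^[2*n] (X 0 * X 1) := by
      rw [Function.iterate_succ_apply]
      simp only [hDX0]
    rw [hit, iter_leibniz, MvPolynomial.coeff_sum]
    simp only [MvPolynomial.coeff_smul]
    simp only [nsmul_eq_mul]
    rw [sum_even_reindex _ n ?vanish]
    case vanish =>
      intro k hk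
      rcases le_or_gt k (2*n) with hkn | hkn
      · rw [vanish k (2*n-k) (by omega) _ (hμ2 _ _ _), mul_zero]
      · rw [Nat.choose_eq_zero_of_lt hkn]
        simp
    refine Finset.sum_congr rfl fun k hk => ?_
    have hkn : k ≤ n := by simpa [Nat.lt_succ_iff] using hk
    congr 1
    have hμeq : M 1 (2*i+1) 0 (2*n+1 - (2*i+1))
        = M 1 ((2*k) % 2 + (2*i+1)) 0 ((2*k - (2*k) % 2 + (2*n-2*k)) - 2*i) := by
      rw [show (2*k) % 2 + (2*i+1) = 2*i+1 by omega,
        show 2*k - (2*k) % 2 + (2*n-2*k) = 2*n+1 - 1 by omega]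
      congr 1
      omega
    rw [hμeq, conv (2*k) (2*n-2*k) i (by omega)]
    refine Finset.sum_congr rfl fun j hj => ?_
    have hji : j ≤ i := by simpa [Nat.lt_succ_iff] using hj
    rw [show (i:ℤ) - (j:ℤ) = ((i - j : ℕ) : ℤ) by omega]
    rw [tC_eval (2*k) j, sC_eval (2*n-2*k) (i-j)]
    have hek : Even (2*k) := by simp [Nat.even_mul]
    have heb : Even (2*n-2*k) := Nat.even_iff.mpr (by omega)
    simp only [if_pos hek, if_pos heb]
    rw [show (2*k) % 2 + 2*j = 2*j by omega]
  · -- second identity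
    rw [show (i:ℤ) + 1 = ((i + 1 : ℕ) : ℤ) by omega]
    rw [tC_eval (2*n+2) (i+1)]
    have hev : Even (2*n+2) := Nat.even_iff.mpr (by omega)
    simp only [if_pos hev]
    have hit : (fun p => Dg p)^[2*n+2] (X 0 : MvPolynomial (Fin 4) ℚ)
        = (fun p => Dg p)^[2*n+1] (X 0 * X 1) := by
      rw [show 2*n+2 = (2*n+1)+1 by omega, Function.iterate_succ_apply]
      simp only [hDX0]
    rw [hit, iter_leibniz, MvPolynomial.coeff_sum]
    simp only [MvPolynomial.coeff_smul]
    simp only [nsmul_eq_mul]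
    rw [sum_odd_reindex _ n ?vanish]
    case vanish =>
      intro k hk
      rcases le_or_gt k (2*n+1) with hkn | hkn
      · rw [vanish k (2*n+1-k) (by omega) _ (hμ2 _ _ _), mul_zero]
      · rw [Nat.choose_eq_zero_of_lt hkn]
        simp
    refine Finset.sum_congr rfl fun k hk => ?_
    have hkn : k ≤ n := by simpa [Nat.lt_succ_iff] using hk
    rw [show 2*n+1-(2*k+1) = 2*n-2*k by omega]
    congr 1
    have hμeq : M 1 (2*(i+1)) 0 (2*n+2 - 2*(i+1))
        = M 1 ((2*k+1) % 2 + (2*i+1)) 0 ((2*k+1 - (2*k+1) % 2 + (2*n-2*k)) - 2*i) := by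
      rw [show (2*k+1) % 2 + (2*i+1) = 2*(i+1) by omega,
        show 2*k+1 - (2*k+1) % 2 + (2*n-2*k) = 2*n by omega]
      congr 1
      omega
    rw [hμeq, conv (2*k+1) (2*n-2*k) i (by omega)]
    refine Finset.sum_congr rfl fun j hj => ?_
    have hji : j ≤ i := by simpa [Nat.lt_succ_iff] using hj
    rw [show (i:ℤ) - (j:ℤ) = ((i - j : ℕ) : ℤ) by omega]
    rw [tC_eval (2*k+1) j, sC_eval (2*n-2*k) (i-j)]
    have hok : ¬ Even (2*k+1) := by simp [Nat.even_add_one, Nat.even_mul]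
    have heb : Even (2*n-2*k) := Nat.even_iff.mpr (by omega)
    simp only [if_neg hok, if_pos heb]
    rw [show (2*k+1) % 2 + 2*j = 2*j+1 by omega]
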